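/- Let V(x) = R_y(−x) and |ψ⟩ = R_y(π/2)|0⟩. With |Ψ_f'⟩ = Σ_{j⃗} p(j⃗)|j⃗⟩ ⊗ V(x_{n,j_n})⋯V(x_{1,j_1})|ψ⟩ and a' = ‖(I⊗|1⟩⟨1|)|Ψ_f'⟩‖², one has E[sin(S_n)] = 1 − 2a'. -/

import Mathlib

open Matrix

/-- The single-qubit rotation `R_y(x) = cos(x/2) I - i sin(x/2) σ_y`. -/
noncomputable def Ry (x : ℝ) : Matrix (Fin 2) (Fin 2) ℂ :=
  !![(Real.cos (x / 2) : ℂ), -(Real.sin (x / 2) : ℂ);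
     (Real.sin (x / 2) : ℂ), (Real.cos (x / 2) : ℂ)]

/-- The computational basis state `|0⟩`. -/
def ket0 : Fin 2 → ℂ := ![1, 0]

lemma Ry_mul (a b : ℝ) : Ry a * Ry b = Ry (a + b) := by
  ext i j
  fin_cases i <;> fin_cases j <;>
    simp [Ry, Matrix.mul_apply, Fin.sum_univ_two, add_div, Real.cos_add, Real.sin_add] <;> ring

lemma Ry_list_prod (L : List ℝ) : (L.map Ry).prod = Ry L.sum := by
  induction L with
  | nil =>
    simp only [List.map_nil, List.prod_nil, List.sum_nil]
    ext i j
    fin_cases i <;> fin_cases j <;> simp [Ry]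
  | cons a L ih => simp [ih, Ry_mul]

lemma Ry_mulVec_ket0 (θ : ℝ) :
    Ry θ *ᵥ ket0 = ![(Real.cos (θ / 2) : ℂ), (Real.sin (θ / 2) : ℂ)] := by
  funext i
  fin_cases i <;> simp [Ry, ket0, Matrix.mulVec, dotProduct, Fin.sum_univ_two]

/-- with `V(x) = R_y(-x)` and input `|ψ⟩ = R_y(π/2)|0⟩`, the amplitude
`a' = ‖(I ⊗ |1⟩⟨1|)|Ψ_f'⟩‖²` satisfies `E[sin S_n] = 1 - 2a'`. -/
theorem amplitude_estimation_sin
    (n k : ℕ)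
    (x : Fin n → Fin k → ℝ)
    (p : (Fin n → Fin k) → ℝ)
    (hp : ∑ j : Fin n → Fin k, (p j) ^ 2 = 1)
    (Ψf : (Fin n → Fin k) × Fin 2 → ℂ)
    (hΨf : ∀ j a, Ψf (j, a) =
      (p j : ℂ) *
        (((List.ofFn fun l : Fin n => Ry (-(x l (j l)))).reverse.prod)
          *ᵥ (Ry (Real.pi / 2) *ᵥ ket0)) a) :
    ∑ j : Fin n → Fin k, (p j) ^ 2 * Real.sin (∑ l : Fin n, x l (j l))
      = 1 - 2 * ∑ j : Fin n → Fin k, ‖Ψf (j, 1)‖ ^ 2 := by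
  have key : ∀ j : Fin n → Fin k,
      ‖Ψf (j, 1)‖ ^ 2 = (p j) ^ 2 * ((1 - Real.sin (∑ l : Fin n, x l (j l))) / 2) := by
    intro j
    set S := ∑ l : Fin n, x l (j l) with hS
    have hprod : ((List.ofFn fun l : Fin n => Ry (-(x l (j l)))).reverse.prod) = Ry (-S) := by
      have h1 : (List.ofFn fun l : Fin n => Ry (-(x l (j l))))
          = (List.ofFn fun l : Fin n => -(x l (j l))).map Ry := by
        rw [List.map_ofFn]; rfl
      rw [h1, ← List.map_reverse, Ry_list_prod, List.sum_reverse, List.sum_ofFn]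
      simp [hS]
    have hvec : ((List.ofFn fun l : Fin n => Ry (-(x l (j l)))).reverse.prod)
        *ᵥ (Ry (Real.pi / 2) *ᵥ ket0)
        = ![(Real.cos ((Real.pi / 2 - S) / 2) : ℂ), (Real.sin ((Real.pi / 2 - S) / 2) : ℂ)] := by
      rw [hprod, mulVec_mulVec, Ry_mul,
        show -S + Real.pi / 2 = Real.pi / 2 - S by ring, Ry_mulVec_ket0]
    rw [hΨf j 1, hvec]
    have hsin : Real.sin ((Real.pi / 2 - S) / 2) ^ 2 = (1 - Real.sin S) / 2 := by
      have := Real.sin_sq_eq_half_sub ((Real.pi / 2 - S) / 2)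
      rw [show (2 : ℝ) * ((Real.pi / 2 - S) / 2) = Real.pi / 2 - S by ring,
        Real.cos_pi_div_two_sub] at this
      linarith
    simp only [Matrix.cons_val_one, Matrix.head_cons, Matrix.cons_val_zero]
    rw [norm_mul, mul_pow, Complex.norm_real, Complex.norm_real, Real.norm_eq_abs,
      Real.norm_eq_abs, sq_abs, sq_abs, hsin]
  have hsum : ∑ j : Fin n → Fin k, ‖Ψf (j, 1)‖ ^ 2
      = (1 - ∑ j : Fin n → Fin k, (p j) ^ 2 * Real.sin (∑ l : Fin n, x l (j l))) / 2 := by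
    rw [Finset.sum_congr rfl fun j _ => key j]
    have h2 : ∀ j : Fin n → Fin k,
        (p j) ^ 2 * ((1 - Real.sin (∑ l : Fin n, x l (j l))) / 2)
          = (p j) ^ 2 / 2 - ((p j) ^ 2 * Real.sin (∑ l : Fin n, x l (j l))) / 2 := by
      intro j; ring
    rw [Finset.sum_congr rfl fun j _ => h2 j, Finset.sum_sub_distrib,
      ← Finset.sum_div, ← Finset.sum_div, hp]
    ring
  rw [hsum]; ring
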